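/- Let M ≥ 0. For n ≥ 0 define P_n(x, M) = L_n(x) + ∑_{j=0}^{n-1} (-1)^{n+1+j}·(n!·M/(j!·(nM+1)))·L_j(x). Then for every n ≥ 0, ∫_0^∞ P_n(x, M)²·e^{-x} dx + M·P_n(0, M)² = (n!)²·((n+1)M+1)/(nM+1), and for every n ≥ 1 the polynomial identity L_n(X) = P_{n+1}'(X, M)/(n+1) - (σ_n/n)·P_n'(X, M) holds with σ_n = - n(1+nM)/((n+1)M+1). -/

import Mathlib

open Polynomial MeasureTheory Finset

/-- The monic Laguerre–Sonin polynomial `L_n^α`; `L_n = L_n^0`. -/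
noncomputable def laguerreS (α : ℝ) (n : ℕ) : Polynomial ℝ :=
  ∑ m ∈ Finset.range (n + 1),
    Polynomial.C ((-1 : ℝ) ^ n * n.factorial * ((-1 : ℝ) ^ m / m.factorial) *
      (Real.Gamma ((n : ℝ) + α + 1) /
        (Real.Gamma ((m : ℝ) + α + 1) * (n - m).factorial))) *
      Polynomial.X ^ m

/-- The polynomial `P_n(x, M) = L_n(x) + ∑_{j<n} (-1)^{n+1+j}·(n!·M/(j!·(nM+1)))·L_j(x)`. -/
noncomputable def Pm (M : ℝ) (n : ℕ) : Polynomial ℝ :=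
  laguerreS 0 n + ∑ j ∈ Finset.range n,
    Polynomial.C ((-1 : ℝ) ^ (n + 1 + j) *
      ((n.factorial : ℝ) * M / ((j.factorial : ℝ) * ((n : ℝ) * M + 1)))) * laguerreS 0 j

noncomputable def lc (n m : ℕ) : ℝ :=
  (-1 : ℝ) ^ (n + m) * ((n.factorial : ℝ) / (m.factorial : ℝ)) * (n.choose m : ℝ)

lemma gamma_fact (n : ℕ) : Real.Gamma ((n : ℝ) + 0 + 1) = (n.factorial : ℝ) := by
  rw [add_zero]; exact Real.Gamma_nat_eq_factorial n

lemma lag_term (n m : ℕ) (hm : m ≤ n) :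
    (-1 : ℝ) ^ n * n.factorial * ((-1 : ℝ) ^ m / m.factorial) *
      (Real.Gamma ((n : ℝ) + 0 + 1) /
        (Real.Gamma ((m : ℝ) + 0 + 1) * (n - m).factorial)) = lc n m := by
  rw [gamma_fact n, gamma_fact m, lc]
  rw [Nat.cast_choose ℝ hm]
  have h1 : (m.factorial : ℝ) ≠ 0 := Nat.cast_ne_zero.2 m.factorial_ne_zero
  have h2 : ((n - m).factorial : ℝ) ≠ 0 := Nat.cast_ne_zero.2 (n - m).factorial_ne_zero
  rw [pow_add]
  ring

lemma lag_coeff (n k : ℕ) : (laguerreS 0 n).coeff k = lc n k := by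
  rw [laguerreS, Polynomial.finset_sum_coeff]
  simp only [Polynomial.coeff_C_mul, Polynomial.coeff_X_pow, mul_ite, mul_one, mul_zero]
  rw [Finset.sum_ite_eq (Finset.range (n + 1)) k]
  by_cases h : k ≤ n
  · rw [if_pos (Finset.mem_range.2 (by omega))]
    exact lag_term n k h
  · rw [if_neg (by simp; omega), lc, Nat.choose_eq_zero_of_lt (by omega)]
    simp

lemma lag_eval (n : ℕ) (x : ℝ) :
    (laguerreS 0 n).eval x = ∑ m ∈ range (n + 1), lc n m * x ^ m := by
  rw [laguerreS, Polynomial.eval_finset_sum]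
  refine Finset.sum_congr rfl fun m hm => ?_
  rw [Polynomial.eval_mul, Polynomial.eval_C, Polynomial.eval_pow, Polynomial.eval_X,
    lag_term n m (Nat.lt_succ_iff.1 (Finset.mem_range.1 hm))]


lemma momentInt (m : ℕ) :
    IntegrableOn (fun x : ℝ => x ^ m * Real.exp (-x)) (Set.Ioi 0) := by
  have h := Real.GammaIntegral_convergent (s := (m : ℝ) + 1) (by positivity)
  have : (fun x : ℝ => Real.exp (-x) * x ^ (((m : ℝ) + 1) - 1)) =
      fun x : ℝ => x ^ m * Real.exp (-x) := by
    funext x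
    rw [add_sub_cancel_right, Real.rpow_natCast, mul_comm]
  rwa [this] at h

lemma moment (m : ℕ) :
    ∫ x in Set.Ioi (0 : ℝ), x ^ m * Real.exp (-x) = (m.factorial : ℝ) := by
  have h := Real.Gamma_eq_integral (s := (m : ℝ) + 1) (by positivity)
  have h2 : Real.Gamma ((m : ℝ) + 1) = (m.factorial : ℝ) := Real.Gamma_nat_eq_factorial m
  have h3 : (fun x : ℝ => Real.exp (-x) * x ^ (((m : ℝ) + 1) - 1)) =
      fun x : ℝ => x ^ m * Real.exp (-x) := by
    funext x
    rw [add_sub_cancel_right, Real.rpow_natCast, mul_comm]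
  rw [h3] at h
  rw [← h, h2]

lemma integral_sum_mono {ι : Type*} (s : Finset ι) (c : ι → ℝ) (e : ι → ℕ) :
    ∫ x in Set.Ioi (0 : ℝ), (∑ i ∈ s, c i * x ^ (e i)) * Real.exp (-x) =
      ∑ i ∈ s, c i * ((e i).factorial : ℝ) := by
  have h1 : ∀ x : ℝ, (∑ i ∈ s, c i * x ^ (e i)) * Real.exp (-x) =
      ∑ i ∈ s, c i * (x ^ (e i) * Real.exp (-x)) := by
    intro x; rw [Finset.sum_mul]; exact Finset.sum_congr rfl fun i _ => by ring
  simp only [h1]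
  rw [integral_finset_sum _ fun i _ => ((momentInt (e i)).const_mul (c i))]
  exact Finset.sum_congr rfl fun i _ => by rw [MeasureTheory.integral_const_mul, moment]

lemma fin_diff (n : ℕ) (f : ℕ → ℝ) :
    ∑ a ∈ range (n + 2), (-1 : ℝ) ^ a * ((n + 1).choose a : ℝ) * f a =
      ∑ a ∈ range (n + 1), (-1 : ℝ) ^ a * (n.choose a : ℝ) * (f a - f (a + 1)) := by
  rw [Finset.sum_range_succ' (fun a => (-1 : ℝ) ^ a * ((n + 1).choose a : ℝ) * f a)]
  simp only [Nat.choose_succ_succ, Nat.cast_add, pow_succ]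
  have h1 : ∑ a ∈ range (n + 1), (-1 : ℝ) ^ a * (-1) * ((n.choose a : ℝ) + (n.choose (a + 1) : ℝ)) * f (a + 1) =
      (∑ a ∈ range (n + 1), -((-1 : ℝ) ^ a * (n.choose a : ℝ) * f (a + 1))) +
      ∑ a ∈ range (n + 1), (-1 : ℝ) ^ a * (-1) * (n.choose (a + 1) : ℝ) * f (a + 1) := by
    rw [← Finset.sum_add_distrib]; exact Finset.sum_congr rfl fun a _ => by ring
  rw [h1]
  have h2 : ∑ a ∈ range (n + 1), (-1 : ℝ) ^ a * (-1) * (n.choose (a + 1) : ℝ) * f (a + 1) =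
      ∑ a ∈ range (n + 2), (-1 : ℝ) ^ a * (n.choose a : ℝ) * f a - f 0 := by
    rw [Finset.sum_range_succ' (fun a => (-1 : ℝ) ^ a * (n.choose a : ℝ) * f a)]
    simp only [pow_zero, Nat.choose_zero_right, Nat.cast_one, one_mul]
    rw [add_sub_cancel_right]
    exact Finset.sum_congr rfl fun a _ => by ring
  rw [h2, Finset.sum_range_succ (fun a => (-1 : ℝ) ^ a * (n.choose a : ℝ) * f a),
    Nat.choose_succ_self, Nat.cast_zero]
  simp only [mul_sub, Finset.sum_sub_distrib, Finset.sum_neg_distrib]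
  simp only [pow_zero, Nat.choose_zero_right, Nat.cast_one, one_mul]
  ring


lemma comb (m : ℕ) : ∀ n k : ℕ,
    ∑ a ∈ range (n + 1), (-1 : ℝ) ^ a * (n.choose a : ℝ) * ((a + m).choose k : ℝ) =
      if n ≤ k then (-1 : ℝ) ^ n * (m.choose (k - n) : ℝ) else 0 := by
  intro n
  induction n with
  | zero => intro k; simp
  | succ n ih =>
    intro k
    rw [fin_diff n (fun a => ((a + m).choose k : ℝ))]
    cases k with
    | zero =>
      simp only [Nat.choose_zero_right, Nat.cast_one, sub_self, mul_zero, Finset.sum_const_zero]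
      rw [if_neg (by omega)]
    | succ k =>
      have hstep : ∀ a : ℕ, (((a + m).choose (k + 1) : ℝ) - ((a + 1 + m).choose (k + 1) : ℝ)) =
          -(((a + m).choose k : ℝ)) := by
        intro a
        have : (a + 1 + m).choose (k + 1) = (a + m).choose k + (a + m).choose (k + 1) := by
          rw [show a + 1 + m = (a + m) + 1 by omega, Nat.choose_succ_succ]
        rw [this]; push_cast; ring
      simp only [hstep]
      have h2 : ∑ a ∈ range (n + 1), (-1 : ℝ) ^ a * (n.choose a : ℝ) * -(((a + m).choose k : ℝ)) =
          -(∑ a ∈ range (n + 1), (-1 : ℝ) ^ a * (n.choose a : ℝ) * ((a + m).choose k : ℝ)) := by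
        rw [← Finset.sum_neg_distrib]; exact Finset.sum_congr rfl fun a _ => by ring
      rw [h2, ih k]
      by_cases h : n ≤ k
      · rw [if_pos h, if_pos (by omega)]
        rw [show k + 1 - (n + 1) = k - n by omega]
        ring
      · rw [if_neg h, if_neg (by omega), neg_zero]

lemma hockey : ∀ n k : ℕ, ∑ j ∈ range n, (j.choose k : ℝ) = (n.choose (k + 1) : ℝ) := by
  intro n
  induction n with
  | zero => simp
  | succ n ih =>
    intro k
    rw [Finset.sum_range_succ, ih k, Nat.choose_succ_succ, Nat.cast_add]
    ring
lemma sumC (k m : ℕ) :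
    ∑ b ∈ range (k + 1), lc k b * ((b + m).factorial : ℝ) =
      (k.factorial : ℝ) * (m.factorial : ℝ) * (m.choose k : ℝ) := by
  have key : ∀ b : ℕ, lc k b * ((b + m).factorial : ℝ) =
      ((-1 : ℝ) ^ k * (k.factorial : ℝ) * (m.factorial : ℝ)) *
        ((-1 : ℝ) ^ b * (k.choose b : ℝ) * ((b + m).choose m : ℝ)) := by
    intro b
    have hfac : ((b + m).choose m : ℝ) * (m.factorial : ℝ) * (b.factorial : ℝ) =
        ((b + m).factorial : ℝ) := by
      have := Nat.choose_mul_factorial_mul_factorial (Nat.le_add_left m b)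
      rw [Nat.add_sub_cancel] at this
      exact_mod_cast this
    rw [lc, ← hfac, pow_add]
    have hb : (b.factorial : ℝ) ≠ 0 := Nat.cast_ne_zero.2 b.factorial_ne_zero
    field_simp
  simp only [key]
  rw [← Finset.mul_sum]
  rw [comb m k m]
  have h1 : ((-1 : ℝ)) ^ k * (-1) ^ k = 1 := by
    rw [← pow_add]; exact Even.neg_one_pow ⟨k, rfl⟩
  by_cases h : k ≤ m
  · rw [if_pos h, Nat.choose_symm h]
    linear_combination ((k.factorial : ℝ) * (m.factorial : ℝ) * (m.choose k : ℝ)) * h1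
  · rw [if_neg h, Nat.choose_eq_zero_of_lt (by omega)]
    simp

lemma ortho_le (j k : ℕ) (hjk : j ≤ k) :
    ∫ x in Set.Ioi (0 : ℝ), (laguerreS 0 j).eval x * (laguerreS 0 k).eval x * Real.exp (-x) =
      if j = k then ((j.factorial : ℝ)) ^ 2 else 0 := by
  have hexp : ∀ x : ℝ, (laguerreS 0 j).eval x * (laguerreS 0 k).eval x =
      ∑ p ∈ (range (j + 1)) ×ˢ (range (k + 1)), (lc j p.1 * lc k p.2) * x ^ (p.1 + p.2) := by
    intro x
    rw [lag_eval, lag_eval, Finset.sum_mul_sum, Finset.sum_product]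
    exact Finset.sum_congr rfl fun a _ => Finset.sum_congr rfl fun b _ => by
      rw [pow_add]; ring
  simp only [hexp]
  rw [integral_sum_mono]
  rw [Finset.sum_product]
  have inner : ∀ a ∈ range (j + 1), ∑ b ∈ range (k + 1), (lc j a * lc k b) * ((a + b).factorial : ℝ) =
      lc j a * ((k.factorial : ℝ) * (a.factorial : ℝ) * (a.choose k : ℝ)) := by
    intro a _
    rw [← sumC k a]
    rw [Finset.mul_sum]
    exact Finset.sum_congr rfl fun b _ => by rw [show a + b = b + a by omega]; ring
  rw [Finset.sum_congr rfl inner]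
  by_cases h : j = k
  · subst h
    rw [if_pos rfl]
    rw [Finset.sum_eq_single j]
    · rw [lc]; simp [Nat.choose_self]
      have : (j.factorial : ℝ) ≠ 0 := Nat.cast_ne_zero.2 j.factorial_ne_zero
      field_simp
    · intro a ha hne
      rw [Nat.choose_eq_zero_of_lt (by have := Finset.mem_range.1 ha; omega)]
      simp
    · intro h; exact absurd (Finset.self_mem_range_succ j) h
  · rw [if_neg h]
    refine Finset.sum_eq_zero fun a ha => ?_
    rw [Nat.choose_eq_zero_of_lt (by have := Finset.mem_range.1 ha; omega)]
    simp
lemma ortho (j k : ℕ) :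
    ∫ x in Set.Ioi (0 : ℝ), (laguerreS 0 j).eval x * (laguerreS 0 k).eval x * Real.exp (-x) =
      if j = k then ((j.factorial : ℝ)) ^ 2 else 0 := by
  rcases le_total j k with h | h
  · exact ortho_le j k h
  · have := ortho_le k j h
    have hcomm : ∀ x : ℝ, (laguerreS 0 j).eval x * (laguerreS 0 k).eval x * Real.exp (-x) =
        (laguerreS 0 k).eval x * (laguerreS 0 j).eval x * Real.exp (-x) := fun x => by ring
    simp only [hcomm]
    rw [this]
    by_cases he : j = k
    · subst he; simp
    · rw [if_neg he, if_neg (Ne.symm he)]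

lemma poly_exp_integrable (p : Polynomial ℝ) :
    IntegrableOn (fun x : ℝ => p.eval x * Real.exp (-x)) (Set.Ioi 0) := by
  have h1 : (fun x : ℝ => p.eval x * Real.exp (-x)) =
      fun x : ℝ => ∑ i ∈ range (p.natDegree + 1), p.coeff i * (x ^ i * Real.exp (-x)) := by
    funext x
    rw [Polynomial.eval_eq_sum_range, Finset.sum_mul]
    exact Finset.sum_congr rfl fun i _ => by ring
  rw [h1]
  exact integrable_finset_sum _ fun i _ => (momentInt i).const_mul (p.coeff i)
noncomputable def dd (M : ℝ) (n : ℕ) : ℕ → ℝ := fun j =>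
  if j = n then 1 else
    (-1 : ℝ) ^ (n + 1 + j) * ((n.factorial : ℝ) * M / ((j.factorial : ℝ) * ((n : ℝ) * M + 1)))

lemma Pm_eq (M : ℝ) (n : ℕ) :
    Pm M n = ∑ j ∈ range (n + 1), Polynomial.C (dd M n j) * laguerreS 0 j := by
  rw [Pm, Finset.sum_range_succ, dd, if_pos rfl, map_one, one_mul, add_comm]
  congr 1
  refine Finset.sum_congr rfl fun j hj => ?_
  rw [dd, if_neg (by have := Finset.mem_range.1 hj; omega)]

lemma lag_eval_zero (j : ℕ) : (laguerreS 0 j).eval 0 = (-1 : ℝ) ^ j * (j.factorial : ℝ) := by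
  rw [← Polynomial.coeff_zero_eq_eval_zero, lag_coeff, lc]
  simp

lemma part1 (M : ℝ) (hM : 0 ≤ M) (n : ℕ) :
    (∫ x in Set.Ioi (0 : ℝ), ((Pm M n).eval x) ^ 2 * Real.exp (-x)) +
        M * ((Pm M n).eval 0) ^ 2 =
      (n.factorial : ℝ) ^ 2 * (((n : ℝ) + 1) * M + 1) / ((n : ℝ) * M + 1) := by
  have hE : ((n : ℝ) * M + 1) ≠ 0 := by positivity
  have hfn : (n.factorial : ℝ) ≠ 0 := Nat.cast_ne_zero.2 n.factorial_ne_zero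
  -- evaluation expansion
  have hPx : ∀ x : ℝ, (Pm M n).eval x =
      ∑ j ∈ range (n + 1), dd M n j * (laguerreS 0 j).eval x := by
    intro x
    rw [Pm_eq, Polynomial.eval_finset_sum]
    exact Finset.sum_congr rfl fun j _ => by rw [Polynomial.eval_mul, Polynomial.eval_C]
  -- squared integrand
  have hsq : ∀ x : ℝ, ((Pm M n).eval x) ^ 2 * Real.exp (-x) =
      ∑ p ∈ (range (n + 1)) ×ˢ (range (n + 1)),
        dd M n p.1 * dd M n p.2 *
          ((laguerreS 0 p.1).eval x * (laguerreS 0 p.2).eval x * Real.exp (-x)) := by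
    intro x
    rw [hPx, sq, Finset.sum_mul_sum, ← Finset.sum_product', Finset.sum_mul]
    exact Finset.sum_congr rfl fun p _ => by ring
  have hint : ∫ x in Set.Ioi (0 : ℝ), ((Pm M n).eval x) ^ 2 * Real.exp (-x) =
      ∑ j ∈ range (n + 1), (dd M n j) ^ 2 * ((j.factorial : ℝ)) ^ 2 := by
    simp only [hsq]
    rw [integral_finset_sum _ (fun p _ => ?_)]
    · rw [Finset.sum_congr rfl (fun p _ => MeasureTheory.integral_const_mul _ _)]
      rw [Finset.sum_congr rfl (fun p (_ : p ∈ _) => by rw [ortho p.1 p.2])]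
      rw [Finset.sum_product]
      refine Finset.sum_congr rfl fun j hj => ?_
      rw [Finset.sum_eq_single j]
      · rw [if_pos rfl]; ring
      · intro k _ hk; rw [if_neg (Ne.symm hk), mul_zero]
      · intro h; exact absurd hj h
    · have heq : (fun x : ℝ => dd M n p.1 * dd M n p.2 *
          ((laguerreS 0 p.1).eval x * (laguerreS 0 p.2).eval x * Real.exp (-x))) =
          fun x : ℝ => (dd M n p.1 * dd M n p.2) *
            ((laguerreS 0 p.1 * laguerreS 0 p.2).eval x * Real.exp (-x)) := by
        funext x; rw [Polynomial.eval_mul]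
      rw [heq]
      exact (poly_exp_integrable _).const_mul _
  -- the sum
  have hsum : ∑ j ∈ range (n + 1), (dd M n j) ^ 2 * ((j.factorial : ℝ)) ^ 2 =
      (n.factorial : ℝ) ^ 2 + n * ((n.factorial : ℝ) ^ 2 * M ^ 2 / ((n : ℝ) * M + 1) ^ 2) := by
    rw [Finset.sum_range_succ, dd, if_pos rfl, one_pow, one_mul, add_comm]
    congr 1
    rw [Finset.sum_congr rfl (fun j hj => ?_), Finset.sum_const, Finset.card_range,
      nsmul_eq_mul]
    have hj' := Finset.mem_range.1 hj
    have hfj : (j.factorial : ℝ) ≠ 0 := Nat.cast_ne_zero.2 j.factorial_ne_zero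
    rw [dd, if_neg (by omega)]
    have h1 : ((-1 : ℝ) ^ (n + 1 + j)) ^ 2 = 1 := by
      rw [← pow_mul, mul_comm, pow_mul]; norm_num
    rw [mul_pow, h1, one_mul, div_pow]
    field_simp
  -- evaluation at zero
  have hzero : (Pm M n).eval 0 = (-1 : ℝ) ^ n * (n.factorial : ℝ) / ((n : ℝ) * M + 1) := by
    rw [hPx 0]
    rw [Finset.sum_congr rfl (fun j _ => by rw [lag_eval_zero])]
    rw [Finset.sum_range_succ, dd, if_pos rfl, one_mul]
    have hterm : ∀ j ∈ range n, dd M n j * ((-1 : ℝ) ^ j * (j.factorial : ℝ)) =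
        (-1 : ℝ) ^ (n + 1) * ((n.factorial : ℝ) * M / ((n : ℝ) * M + 1)) := by
      intro j hj
      have hfj : (j.factorial : ℝ) ≠ 0 := Nat.cast_ne_zero.2 j.factorial_ne_zero
      rw [dd, if_neg (by have := Finset.mem_range.1 hj; omega)]
      have hpow : (-1 : ℝ) ^ (n + 1 + j) * (-1 : ℝ) ^ j = (-1 : ℝ) ^ (n + 1) := by
        rw [← pow_add, show n + 1 + j + j = (n + 1) + 2 * j by omega, pow_add, pow_mul]
        norm_num
      have h2 : (-1 : ℝ) ^ (n + 1 + j) * ((n.factorial : ℝ) * M / ((j.factorial : ℝ) * ((n : ℝ) * M + 1))) * ((-1 : ℝ) ^ j * (j.factorial : ℝ)) =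
          ((-1 : ℝ) ^ (n + 1 + j) * (-1 : ℝ) ^ j) * ((n.factorial : ℝ) * M * (j.factorial : ℝ) / ((j.factorial : ℝ) * ((n : ℝ) * M + 1))) := by ring
      rw [h2, hpow]
      congr 1
      rw [mul_comm (j.factorial : ℝ) ((n : ℝ) * M + 1), mul_div_mul_right _ _ hfj]
    rw [Finset.sum_congr rfl hterm, Finset.sum_const, Finset.card_range, nsmul_eq_mul]
    rw [pow_succ]
    field_simp
    ring
  have hm1 : ((-1 : ℝ) ^ n) ^ 2 = 1 := by
    rw [← pow_mul, mul_comm, pow_mul]; norm_num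
  rw [hint, hsum, hzero, div_pow, mul_pow, hm1, one_mul]
  field_simp
  ring
lemma Pm_coeff (M : ℝ) (n k : ℕ) (hE : (n : ℝ) * M + 1 ≠ 0) :
    (Pm M n).coeff k = (-1 : ℝ) ^ (n + k) * ((n.factorial : ℝ) / (k.factorial : ℝ)) *
      ((n.choose k : ℝ) - M / ((n : ℝ) * M + 1) * (n.choose (k + 1) : ℝ)) := by
  rw [Pm, Polynomial.coeff_add, Polynomial.finset_sum_coeff, lag_coeff]
  have hterm : ∀ j ∈ range n,
      (Polynomial.C ((-1 : ℝ) ^ (n + 1 + j) *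
        ((n.factorial : ℝ) * M / ((j.factorial : ℝ) * ((n : ℝ) * M + 1)))) * laguerreS 0 j).coeff k =
      (-((-1 : ℝ) ^ (n + k)) * ((n.factorial : ℝ) * M / ((k.factorial : ℝ) * ((n : ℝ) * M + 1)))) *
        (j.choose k : ℝ) := by
    intro j hj
    rw [Polynomial.coeff_C_mul, lag_coeff, lc]
    have hfj : (j.factorial : ℝ) ≠ 0 := Nat.cast_ne_zero.2 j.factorial_ne_zero
    have hpow : (-1 : ℝ) ^ (n + 1 + j) * (-1 : ℝ) ^ (j + k) = -((-1 : ℝ) ^ (n + k)) := by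
      rw [← pow_add, show n + 1 + j + (j + k) = (n + k) + 1 + 2 * j by omega,
        pow_add, pow_mul]
      norm_num [pow_succ]
    have hfk : (k.factorial : ℝ) ≠ 0 := Nat.cast_ne_zero.2 k.factorial_ne_zero
    have h2 : (-1 : ℝ) ^ (n + 1 + j) * ((n.factorial : ℝ) * M / ((j.factorial : ℝ) * ((n : ℝ) * M + 1))) *
        ((-1 : ℝ) ^ (j + k) * ((j.factorial : ℝ) / (k.factorial : ℝ)) * (j.choose k : ℝ)) =
        ((-1 : ℝ) ^ (n + 1 + j) * (-1 : ℝ) ^ (j + k)) *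
          (((n.factorial : ℝ) * M / ((j.factorial : ℝ) * ((n : ℝ) * M + 1))) * ((j.factorial : ℝ) / (k.factorial : ℝ))) *
          (j.choose k : ℝ) := by ring
    have h3 : ((n.factorial : ℝ) * M / ((j.factorial : ℝ) * ((n : ℝ) * M + 1))) * ((j.factorial : ℝ) / (k.factorial : ℝ)) =
        (n.factorial : ℝ) * M / ((k.factorial : ℝ) * ((n : ℝ) * M + 1)) := by
      field_simp
    rw [h2, hpow, h3]
  rw [Finset.sum_congr rfl hterm, ← Finset.mul_sum, hockey n k, lc]
  have hfk : (k.factorial : ℝ) ≠ 0 := Nat.cast_ne_zero.2 k.factorial_ne_zero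
  field_simp
  ring

lemma part2 (M : ℝ) (hM : 0 ≤ M) (n : ℕ) (hn : 1 ≤ n) :
    laguerreS 0 n =
      Polynomial.C (1 / ((n : ℝ) + 1)) * Polynomial.derivative (Pm M (n + 1)) -
        Polynomial.C ((-((n : ℝ) * (1 + (n : ℝ) * M) / (((n : ℝ) + 1) * M + 1))) / (n : ℝ)) *
          Polynomial.derivative (Pm M n) := by
  have hE1 : ((n : ℝ) * M + 1) ≠ 0 := by positivity
  have hE2 : (((n : ℝ) + 1) * M + 1) ≠ 0 := by positivity
  have hE2' : (((n + 1 : ℕ) : ℝ) * M + 1) ≠ 0 := by push_cast; exact hE2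
  have hn1 : ((n : ℝ)) ≠ 0 := by
    have : (0 : ℝ) < (n : ℝ) := by exact_mod_cast hn
    linarith
  have hn2 : ((n : ℝ) + 1) ≠ 0 := by positivity
  ext k
  rw [lag_coeff, lc, Polynomial.coeff_sub, Polynomial.coeff_C_mul, Polynomial.coeff_C_mul,
    Polynomial.coeff_derivative, Polynomial.coeff_derivative,
    Pm_coeff M (n + 1) (k + 1) hE2', Pm_coeff M n (k + 1) hE1]
  have p1 : ((n + 1).choose (k + 1) : ℝ) = (n.choose k : ℝ) + (n.choose (k + 1) : ℝ) := by
    rw [Nat.choose_succ_succ]; push_cast; ring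
  have p2 : ((n + 1).choose (k + 1 + 1) : ℝ) = (n.choose (k + 1) : ℝ) + (n.choose (k + 2) : ℝ) := by
    rw [Nat.choose_succ_succ]; push_cast; ring
  have e1 : (-1 : ℝ) ^ (n + 1 + (k + 1)) = (-1 : ℝ) ^ (n + k) := by
    rw [show n + 1 + (k + 1) = (n + k) + 2 by omega, pow_add]; norm_num
  have e2 : (-1 : ℝ) ^ (n + (k + 1)) = -((-1 : ℝ) ^ (n + k)) := by
    rw [show n + (k + 1) = (n + k) + 1 by omega, pow_succ]; ring
  have f1 : ((n + 1).factorial : ℝ) = ((n : ℝ) + 1) * (n.factorial : ℝ) := by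
    rw [Nat.factorial_succ]; push_cast; ring
  have f2 : ((k + 1).factorial : ℝ) = ((k : ℝ) + 1) * (k.factorial : ℝ) := by
    rw [Nat.factorial_succ]; push_cast; ring
  have hfk : (k.factorial : ℝ) ≠ 0 := Nat.cast_ne_zero.2 k.factorial_ne_zero
  have hk1 : ((k : ℝ) + 1) ≠ 0 := by positivity
  rw [p1, p2, e1, e2, f1, f2]
  push_cast
  field_simp
  ring

theorem stmt5 (M : ℝ) (hM : 0 ≤ M) :
    (∀ n : ℕ,
      (∫ x in Set.Ioi (0 : ℝ), ((Pm M n).eval x) ^ 2 * Real.exp (-x)) +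
          M * ((Pm M n).eval 0) ^ 2 =
        (n.factorial : ℝ) ^ 2 * (((n : ℝ) + 1) * M + 1) / ((n : ℝ) * M + 1)) ∧
    ∀ n : ℕ, 1 ≤ n →
      laguerreS 0 n =
        Polynomial.C (1 / ((n : ℝ) + 1)) * Polynomial.derivative (Pm M (n + 1)) -
          Polynomial.C ((-((n : ℝ) * (1 + (n : ℝ) * M) / (((n : ℝ) + 1) * M + 1))) / (n : ℝ)) *
            Polynomial.derivative (Pm M n) := by
  exact ⟨fun n => part1 M hM n, fun n hn => part2 M hM n hn⟩
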